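/- Let n ≥ 1 be an integer, s ∈ (0,1), ε ≥ 0, χ ∈ ℂⁿ and θ ∈ ℝ with |θ| ≤ 2π. Then Jac(Γ_s^ε)(χ,θ) ≥ s^{2n+3}·Jac(Γ_1^ε)(χ,θ); that is, the ratio of Jacobians Jac(Γ_s^ε)/(s^{2n+1}·Jac(Γ_1^ε)) is bounded below by s² wherever Jac(Γ_1^ε) is positive. -/

import Mathlib

open Real

/-- The Jacobian determinant `Jac(Γ_s^ε)(χ,θ)` of the geodesic-endpoint map `Γ_s^ε` of the
Riemannian approximation `M^ε` of `ℍⁿ`, given by its closed formula (valid for `|θ| ≤ 2π`). -/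
noncomputable def heisenbergJacGamma (n : ℕ) (s ε : ℝ)
    (χ : EuclideanSpace ℂ (Fin n)) (θ : ℝ) : ℝ :=
  if θ = 0 then s ^ (2 * n + 3) * ‖χ‖ ^ 2 / 3 + s ^ (2 * n + 1) * ε ^ 2 / 4
  else
    2 ^ (2 * n + 2) * s * ‖χ‖ ^ 2 * (Real.sin (θ * s / 2) / θ) ^ (2 * n - 1) *
        ((Real.sin (θ * s / 2) - θ * s / 2 * Real.cos (θ * s / 2)) / θ ^ 3) +
      2 ^ (2 * n) * (ε ^ 2 / 4) * s * (Real.sin (θ * s / 2) / θ) ^ (2 * n)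

/-- Concavity of `sin` on `[0, π]` gives `s · sin x ≤ sin (s·x)` for `s ∈ [0,1]`. -/
lemma heisenberg_sin_mul_ge {s x : ℝ} (hs0 : 0 ≤ s) (hs1 : s ≤ 1) (hx0 : 0 ≤ x) (hxπ : x ≤ π) :
    s * Real.sin x ≤ Real.sin (s * x) := by
  have h := strictConcaveOn_sin_Icc.concaveOn.2 (x := 0) (y := x)
    ⟨le_refl 0, Real.pi_pos.le⟩ ⟨hx0, hxπ⟩ (show (0:ℝ) ≤ 1 - s by linarith) hs0 (by ring)
  simpa using h

/-- `sin t - t cos t ≥ 0` on `[0, π]`. -/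
lemma heisenberg_g_nonneg {t : ℝ} (ht0 : 0 ≤ t) (htπ : t ≤ π) :
    0 ≤ Real.sin t - t * Real.cos t := by
  have hmono : MonotoneOn (fun u : ℝ => Real.sin u - u * Real.cos u) (Set.Icc 0 π) := by
    apply monotoneOn_of_deriv_nonneg (convex_Icc _ _)
    · fun_prop
    · exact Differentiable.differentiableOn (by fun_prop)
    · intro x hx
      rw [interior_Icc] at hx
      have hd : HasDerivAt (fun u : ℝ => Real.sin u - u * Real.cos u) (x * Real.sin x) x := by
        have h1 := (Real.hasDerivAt_sin x).sub ((hasDerivAt_id x).mul (Real.hasDerivAt_cos x))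
        exact h1.congr_deriv (by simp only [id]; ring)
      rw [hd.deriv]
      exact mul_nonneg hx.1.le (Real.sin_nonneg_of_nonneg_of_le_pi hx.1.le hx.2.le)
  have := hmono ⟨le_refl 0, Real.pi_pos.le⟩ ⟨ht0, htπ⟩ ht0
  simpa using this

/-- The key scaling inequality `s³ (sin t - t cos t) ≤ sin (st) - st cos (st)` on `[0, π]`. -/
lemma heisenberg_g_bound {s t : ℝ} (hs0 : 0 ≤ s) (hs1 : s ≤ 1) (ht0 : 0 ≤ t) (htπ : t ≤ π) :
    s ^ 3 * (Real.sin t - t * Real.cos t) ≤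
      Real.sin (s * t) - s * t * Real.cos (s * t) := by
  have hmono : MonotoneOn
      (fun u : ℝ => Real.sin (s * u) - s * u * Real.cos (s * u)
        - s ^ 3 * (Real.sin u - u * Real.cos u)) (Set.Icc 0 π) := by
    apply monotoneOn_of_deriv_nonneg (convex_Icc _ _)
    · fun_prop
    · exact Differentiable.differentiableOn (by fun_prop)
    · intro x hx
      rw [interior_Icc] at hx
      have hsx : HasDerivAt (fun u : ℝ => s * u) s x := by
        simpa using (hasDerivAt_id x).const_mul s
      have hd : HasDerivAt
          (fun u : ℝ => Real.sin (s * u) - s * u * Real.cos (s * u)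
            - s ^ 3 * (Real.sin u - u * Real.cos u))
          (s ^ 2 * x * (Real.sin (s * x) - s * Real.sin x)) x := by
        have h1 : HasDerivAt (fun u : ℝ => Real.sin (s * u)) (Real.cos (s * x) * s) x :=
          (Real.hasDerivAt_sin (s * x)).comp x hsx
        have h2 : HasDerivAt (fun u : ℝ => Real.cos (s * u)) (-Real.sin (s * x) * s) x :=
          (Real.hasDerivAt_cos (s * x)).comp x hsx
        have h3 : HasDerivAt (fun u : ℝ => s * u * Real.cos (s * u))
            (s * Real.cos (s * x) + s * x * (-Real.sin (s * x) * s)) x := hsx.mul h2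
        have h4 : HasDerivAt (fun u : ℝ => Real.sin u - u * Real.cos u) (x * Real.sin x) x := by
          have := (Real.hasDerivAt_sin x).sub ((hasDerivAt_id x).mul (Real.hasDerivAt_cos x))
          exact this.congr_deriv (by simp only [id]; ring)
        have := (h1.sub h3).sub (h4.const_mul (s ^ 3))
        exact this.congr_deriv (by ring)
      rw [hd.deriv]
      have hkey : s * Real.sin x ≤ Real.sin (s * x) :=
        heisenberg_sin_mul_ge hs0 hs1 hx.1.le hx.2.le
      have h0 : 0 ≤ Real.sin (s * x) - s * Real.sin x := by linarith
      exact mul_nonneg (mul_nonneg (sq_nonneg s) hx.1.le) h0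
  have := hmono ⟨le_refl 0, Real.pi_pos.le⟩ ⟨ht0, htπ⟩ ht0
  simp only [mul_zero, Real.sin_zero, Real.cos_zero, sub_zero, zero_mul, sub_self] at this
  linarith

/-- `Jac(Γ_s^ε)(χ,·)` is even in `θ`. -/
lemma heisenbergJacGamma_neg (n : ℕ) (s ε : ℝ) (χ : EuclideanSpace ℂ (Fin n)) (θ : ℝ) :
    heisenbergJacGamma n s ε χ (-θ) = heisenbergJacGamma n s ε χ θ := by
  rcases eq_or_ne θ 0 with h | h
  · simp [h]
  · simp only [heisenbergJacGamma, if_neg h, if_neg (neg_ne_zero.2 h)]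
    have e : -θ * s / 2 = -(θ * s / 2) := by ring
    rw [e, Real.sin_neg, Real.cos_neg, neg_div_neg_eq]
    have e3 : (-Real.sin (θ * s / 2) - -(θ * s / 2) * Real.cos (θ * s / 2)) / (-θ) ^ 3
        = (Real.sin (θ * s / 2) - θ * s / 2 * Real.cos (θ * s / 2)) / θ ^ 3 := by
      rw [show (-Real.sin (θ * s / 2) - -(θ * s / 2) * Real.cos (θ * s / 2))
          = -(Real.sin (θ * s / 2) - θ * s / 2 * Real.cos (θ * s / 2)) by ring,
        show ((-θ) ^ 3 : ℝ) = -(θ ^ 3) by ring, neg_div_neg_eq]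
    rw [e3]

/-- The main estimate for nonnegative `θ`. -/
lemma heisenbergJacGamma_ge_aux (m : ℕ) (s ε : ℝ) (hs0 : 0 < s) (hs1 : s < 1) (hε : 0 ≤ ε)
    (χ : EuclideanSpace ℂ (Fin (m + 1))) (θ : ℝ) (hθ0 : 0 ≤ θ) (hθ : θ ≤ 2 * π) :
    s ^ (2 * (m + 1) + 3) * heisenbergJacGamma (m + 1) 1 ε χ θ
      ≤ heisenbergJacGamma (m + 1) s ε χ θ := by
  rcases eq_or_ne θ 0 with h0 | h0
  · simp only [heisenbergJacGamma, h0, if_true, one_pow]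
    have hle : s ^ (2 * (m + 1) + 3) ≤ s ^ (2 * (m + 1) + 1) :=
      pow_le_pow_of_le_one hs0.le hs1.le (by omega)
    have hX : (0:ℝ) ≤ ‖χ‖ ^ 2 := by positivity
    have hY : (0:ℝ) ≤ ε ^ 2 := by positivity
    nlinarith [mul_nonneg (sub_nonneg.2 hle) hY]
  · have hθpos : 0 < θ := lt_of_le_of_ne hθ0 (Ne.symm h0)
    simp only [heisenbergJacGamma, if_neg h0]
    have e1 : 2 * (m + 1) - 1 = 2 * m + 1 := by omega
    have e4 : 2 * (m + 1) + 3 = 2 * m + 5 := by omega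
    have e3 : 2 * (m + 1) + 2 = 2 * m + 4 := by omega
    have e2 : 2 * (m + 1) = 2 * m + 2 := by omega
    rw [e1, e4, e3, e2]
    have hts : θ * s / 2 = s * (θ / 2) := by ring
    have ht1 : θ * 1 / 2 = θ / 2 := by ring
    rw [hts, ht1]
    set t : ℝ := θ / 2 with ht_def
    have ht0 : 0 ≤ t := by positivity
    have htπ : t ≤ π := by rw [ht_def]; linarith
    have hsin : 0 ≤ Real.sin t := Real.sin_nonneg_of_nonneg_of_le_pi ht0 htπ
    have hms : s * Real.sin t ≤ Real.sin (s * t) :=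
      heisenberg_sin_mul_ge hs0.le hs1.le ht0 htπ
    have hsinst : 0 ≤ Real.sin (s * t) := le_trans (mul_nonneg hs0.le hsin) hms
    have hgn : 0 ≤ Real.sin t - t * Real.cos t := heisenberg_g_nonneg ht0 htπ
    have hgb := heisenberg_g_bound hs0.le hs1.le ht0 htπ
    have hp1 : (s * Real.sin t) ^ (2 * m + 1) ≤ Real.sin (s * t) ^ (2 * m + 1) :=
      pow_le_pow_left₀ (mul_nonneg hs0.le hsin) hms _
    have hp2 : (s * Real.sin t) ^ (2 * m + 2) ≤ Real.sin (s * t) ^ (2 * m + 2) :=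
      pow_le_pow_left₀ (mul_nonneg hs0.le hsin) hms _
    have k1 : s ^ (2 * m + 5) * (Real.sin t ^ (2 * m + 1) * (Real.sin t - t * Real.cos t))
        ≤ s * (Real.sin (s * t) ^ (2 * m + 1)
            * (Real.sin (s * t) - s * t * Real.cos (s * t))) := by
      calc s ^ (2 * m + 5) * (Real.sin t ^ (2 * m + 1) * (Real.sin t - t * Real.cos t))
          = s * ((s * Real.sin t) ^ (2 * m + 1) * (s ^ 3 * (Real.sin t - t * Real.cos t))) := by
            ring
        _ ≤ s * (Real.sin (s * t) ^ (2 * m + 1)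
              * (Real.sin (s * t) - s * t * Real.cos (s * t))) := by
            apply mul_le_mul_of_nonneg_left _ hs0.le
            exact mul_le_mul hp1 hgb (by positivity) (pow_nonneg hsinst _)
    have k2 : s ^ (2 * m + 5) * Real.sin t ^ (2 * m + 2)
        ≤ s * Real.sin (s * t) ^ (2 * m + 2) := by
      calc s ^ (2 * m + 5) * Real.sin t ^ (2 * m + 2)
          = s ^ 2 * (s * (s * Real.sin t) ^ (2 * m + 2)) := by ring
        _ ≤ 1 * (s * Real.sin (s * t) ^ (2 * m + 2)) := by
            apply mul_le_mul (by nlinarith) (mul_le_mul_of_nonneg_left hp2 hs0.le)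
              (mul_nonneg hs0.le (pow_nonneg (mul_nonneg hs0.le hsin) _)) zero_le_one
        _ = s * Real.sin (s * t) ^ (2 * m + 2) := by ring
    rw [mul_add]
    apply add_le_add
    · have c1 : (0:ℝ) ≤ 2 ^ (2 * m + 4) * ‖χ‖ ^ 2 / θ ^ (2 * m + 4) := by positivity
      have h := mul_le_mul_of_nonneg_left k1 c1
      calc s ^ (2 * m + 5) * (2 ^ (2 * m + 4) * 1 * ‖χ‖ ^ 2 * (Real.sin t / θ) ^ (2 * m + 1) *
            ((Real.sin t - t * Real.cos t) / θ ^ 3))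
          = (2 ^ (2 * m + 4) * ‖χ‖ ^ 2 / θ ^ (2 * m + 4)) *
            (s ^ (2 * m + 5) * (Real.sin t ^ (2 * m + 1) * (Real.sin t - t * Real.cos t))) := by
            rw [div_pow]
            field_simp
            ring
        _ ≤ (2 ^ (2 * m + 4) * ‖χ‖ ^ 2 / θ ^ (2 * m + 4)) *
            (s * (Real.sin (s * t) ^ (2 * m + 1)
              * (Real.sin (s * t) - s * t * Real.cos (s * t)))) := h
        _ = 2 ^ (2 * m + 4) * s * ‖χ‖ ^ 2 * (Real.sin (s * t) / θ) ^ (2 * m + 1) *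
            ((Real.sin (s * t) - s * t * Real.cos (s * t)) / θ ^ 3) := by
            rw [div_pow]
            field_simp
            ring
    · have c2 : (0:ℝ) ≤ 2 ^ (2 * m + 2) * (ε ^ 2 / 4) / θ ^ (2 * m + 2) := by positivity
      have h := mul_le_mul_of_nonneg_left k2 c2
      calc s ^ (2 * m + 5) * (2 ^ (2 * m + 2) * (ε ^ 2 / 4) * 1 * (Real.sin t / θ) ^ (2 * m + 2))
          = (2 ^ (2 * m + 2) * (ε ^ 2 / 4) / θ ^ (2 * m + 2)) *
            (s ^ (2 * m + 5) * Real.sin t ^ (2 * m + 2)) := by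
            rw [div_pow]
            field_simp
        _ ≤ (2 ^ (2 * m + 2) * (ε ^ 2 / 4) / θ ^ (2 * m + 2)) *
            (s * Real.sin (s * t) ^ (2 * m + 2)) := h
        _ = 2 ^ (2 * m + 2) * (ε ^ 2 / 4) * s * (Real.sin (s * t) / θ) ^ (2 * m + 2) := by
            rw [div_pow]
            field_simp

/-- For `n ≥ 1`, `s ∈ (0,1)`, `ε ≥ 0`, `χ ∈ ℂⁿ` and `|θ| ≤ 2π`, one has
`Jac(Γ_s^ε)(χ,θ) ≥ s^{2n+3} · Jac(Γ_1^ε)(χ,θ)`. -/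
theorem heisenbergJacGamma_ge (n : ℕ) (hn : 1 ≤ n) (s ε : ℝ) (hs : s ∈ Set.Ioo (0 : ℝ) 1)
    (hε : 0 ≤ ε) (χ : EuclideanSpace ℂ (Fin n)) (θ : ℝ) (hθ : |θ| ≤ 2 * Real.pi) :
    s ^ (2 * n + 3) * heisenbergJacGamma n 1 ε χ θ ≤ heisenbergJacGamma n s ε χ θ := by
  obtain ⟨hs0, hs1⟩ := hs
  obtain ⟨m, rfl⟩ : ∃ m, n = m + 1 := ⟨n - 1, by omega⟩
  rcases le_or_gt 0 θ with h | h
  · exact heisenbergJacGamma_ge_aux m s ε hs0 hs1 hε χ θ h (by rwa [abs_of_nonneg h] at hθ)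
  · have := heisenbergJacGamma_ge_aux m s ε hs0 hs1 hε χ (-θ) (by linarith)
      (by rw [abs_of_neg h] at hθ; linarith)
    rwa [heisenbergJacGamma_neg, heisenbergJacGamma_neg] at this
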